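/- arXiv:1607.07366 — 8 statements merged into one kernel-verified Lean document; each statement's English description precedes it below -/
import Mathlib

section
/- The class 𝔜 is closed under taking subgroups and quotients: if G belongs to 𝔜, then every subgroup of G belongs to 𝔜, and for every normal subgroup N of G the quotient group G/N belongs to 𝔜. -/
/-- A group `G` belongs to the class 𝔜 if every non-abelian subgroup of `G`
is self-normalized. -/
def IsY (G : Type*) [Group G] : Prop :=
  ∀ H : Subgroup G, (∃ a ∈ H, ∃ b ∈ H, a * b ≠ b * a) → Subgroup.normalizer (H : Set G) = H

theorem stmt_0 {G : Type*} [Group G] (hG : IsY G) :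
    (∀ H : Subgroup G, IsY H) ∧
    (∀ (N : Subgroup G) [N.Normal], IsY (G ⧸ N)) := by
  constructor
  · intro K H ⟨a, ha, b, hb, hab⟩
    set H' := H.map K.subtype with hH'
    have hH'na : ∃ a ∈ H', ∃ b ∈ H', a * b ≠ b * a := by
      refine ⟨(a : G), ⟨a, ha, rfl⟩, (b : G), ⟨b, hb, rfl⟩, ?_⟩
      intro h
      exact hab (Subtype.ext h)
    have hnorm := hG H' hH'na
    apply le_antisymm _ H.le_normalizer
    intro x hx
    have hx' := Subgroup.mem_normalizer_iff.mp hx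
    have hxG : (x : G) ∈ Subgroup.normalizer (H' : Set G) := by
      rw [Subgroup.mem_normalizer_iff]
      intro g
      constructor
      · rintro ⟨k, hk, hkg⟩
        simp only [Subgroup.coe_subtype] at hkg
        refine ⟨x * k * x⁻¹, (hx' k).mp hk, ?_⟩
        simp [Subgroup.coe_subtype, hkg]
      · rintro ⟨k, hk, hkg⟩
        simp only [Subgroup.coe_subtype] at hkg
        have hgG : g = (x : G)⁻¹ * (k : G) * (x : G) := by
          rw [hkg]; group
        have hgK : g ∈ K := by
          rw [hgG]; exact K.mul_mem (K.mul_mem (K.inv_mem x.2) k.2) x.2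
        set g' : K := ⟨g, hgK⟩ with hg'def
        have hxk : x * g' * x⁻¹ = k := by
          apply Subtype.ext
          push_cast [hg'def]
          rw [hkg]
        have hg'H : g' ∈ H := (hx' g').mpr (by rw [hxk]; exact hk)
        exact ⟨g', hg'H, rfl⟩
    rw [hnorm] at hxG
    obtain ⟨k, hk, hkx⟩ := hxG
    have : k = x := Subtype.ext hkx
    rwa [← this]
  · intro N hN H ⟨a, ha, b, hb, hab⟩
    set H' := H.comap (QuotientGroup.mk' N) with hH'
    obtain ⟨a', rfl⟩ := QuotientGroup.mk_surjective a
    obtain ⟨b', rfl⟩ := QuotientGroup.mk_surjective b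
    have hnorm := hG H' ⟨a', ha, b', hb, fun h => by
      apply hab
      rw [← QuotientGroup.mk_mul, ← QuotientGroup.mk_mul, h]⟩
    apply le_antisymm _ H.le_normalizer
    intro x hx
    obtain ⟨g, rfl⟩ := QuotientGroup.mk_surjective x
    have hg : g ∈ Subgroup.normalizer (H' : Set G) := by
      rw [Subgroup.mem_normalizer_iff]
      intro h
      have := Subgroup.mem_normalizer_iff.mp hx ((h : G) : G ⧸ N)
      simpa [hH', Subgroup.mem_comap] using this
    rw [hnorm] at hg
    exact hg
end

section
/- Every non-abelian group in 𝔜 is directly indecomposable: if a non-abelian group G belongs to 𝔜 and G is isomorphic to a direct product H × K of two groups H and K, then H is trivial or K is trivial. -/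
lemma aux_Y {G H K : Type*} [Group G] [Group H] [Group K]
    (hG : IsY G) (e : G ≃* H × K) (hH : ∃ a b : H, a * b ≠ b * a) :
    ∀ k : K, k = 1 := by
  obtain ⟨a, b, hab⟩ := hH
  set f := (MonoidHom.snd H K).comp e.toMonoidHom with hf
  have hker : Subgroup.normalizer (f.ker : Set G) = f.ker := by
    apply hG
    refine ⟨e.symm (a, 1), ?_, e.symm (b, 1), ?_, ?_⟩
    · simp [hf, MonoidHom.mem_ker, Subgroup.mem_prod]
    · simp [hf, MonoidHom.mem_ker, Subgroup.mem_prod]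
    · intro hcomm
      apply hab
      have := congrArg e hcomm
      simp only [map_mul, MulEquiv.apply_symm_apply, Prod.mk_mul_mk] at this
      exact congrArg Prod.fst this
  have htop : f.ker = ⊤ := by
    rw [← hker, Subgroup.normalizer_eq_top_iff.mpr f.normal_ker]
  intro k
  have hk : e.symm (1, k) ∈ f.ker := htop ▸ Subgroup.mem_top _
  simpa [hf, MonoidHom.mem_ker, Subgroup.mem_prod] using hk

theorem stmt_2 {G H K : Type*} [Group G] [Group H] [Group K]
    (hG : IsY G) (hna : ∃ a b : G, a * b ≠ b * a) (e : G ≃* H × K) :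
    (∀ h : H, h = 1) ∨ (∀ k : K, k = 1) := by
  by_cases hH : ∃ a b : H, a * b ≠ b * a
  · exact Or.inr (aux_Y hG e hH)
  by_cases hK : ∃ a b : K, a * b ≠ b * a
  · exact Or.inl (aux_Y hG (e.trans (MulEquiv.prodComm)) hK)
  exfalso
  push_neg at hH hK
  obtain ⟨a, b, hab⟩ := hna
  apply hab
  apply e.injective
  rw [map_mul, map_mul]
  ext
  · exact hH _ _
  · exact hK _ _
end

section
/- If a group G belongs to 𝔜, then every proper subnormal subgroup of G is abelian: if H is a proper subgroup of G and there exists a finite chain of subgroups H = K_0 ≤ K_1 ≤ ... ≤ K_n = G in which each K_i is a normal subgroup of K_{i+1}, then H is abelian. -/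
theorem stmt_3 {G : Type*} [Group G] (hG : IsY G) (H : Subgroup G) (hH : H ≠ ⊤)
    (n : ℕ) (K : Fin (n + 1) → Subgroup G)
    (h0 : K 0 = H) (hlast : K (Fin.last n) = ⊤)
    (hchain : ∀ i : Fin n, K i.castSucc ≤ K i.succ ∧
      ((K i.castSucc).subgroupOf (K i.succ)).Normal) :
    ∀ a ∈ H, ∀ b ∈ H, a * b = b * a := by
  by_contra hc
  push_neg at hc
  obtain ⟨a, ha, b, hb, hab⟩ := hc
  have hN : Subgroup.normalizer (H : Set G) = H := hG H ⟨a, ha, b, hb, hab⟩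
  have key : ∀ i : Fin (n + 1), K i = H := by
    intro i
    induction i using Fin.induction with
    | zero => exact h0
    | succ i ih =>
      obtain ⟨hle, hnorm⟩ := hchain i
      rw [ih] at hle
      refine le_antisymm ?_ (by simpa [ih] using hle)
      rw [← hN]
      intro g hg
      rw [Subgroup.mem_normalizer_iff]
      intro h
      constructor
      · intro hh
        have hmem : (⟨h, hle hh⟩ : K i.succ) ∈ (K i.castSucc).subgroupOf (K i.succ) := by
          simpa [Subgroup.mem_subgroupOf, ih] using hh
        have := hnorm.conj_mem _ hmem ⟨g, hg⟩
        simpa [Subgroup.mem_subgroupOf, ih] using this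
      · intro hh
        have hmem : (⟨g * h * g⁻¹, hle hh⟩ : K i.succ) ∈ (K i.castSucc).subgroupOf (K i.succ) := by
          simpa [Subgroup.mem_subgroupOf, ih] using hh
        have := hnorm.conj_mem _ hmem ⟨g⁻¹, (K i.succ).inv_mem hg⟩
        have h2 : g⁻¹ * (g * h * g⁻¹) * g⁻¹⁻¹ ∈ H := by
          simpa [Subgroup.mem_subgroupOf, ih] using this
        simpa [mul_assoc] using h2
  exact hH (by rw [← key (Fin.last n), hlast])
end

section
/- If a group G belongs to 𝔜 and G is not perfect (i.e., the commutator subgroup [G,G] is a proper subgroup of G), then G is metabelian, i.e., the commutator subgroup [G,G] is abelian. -/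
theorem stmt_4 {G : Type*} [Group G] (hG : IsY G) (hnp : commutator G ≠ ⊤) :
    ∀ a ∈ commutator G, ∀ b ∈ commutator G, a * b = b * a := by
  intro a ha b hb
  by_contra h
  apply hnp
  have := hG (commutator G) ⟨a, ha, b, hb, h⟩
  rw [Subgroup.normalizer_eq_top_iff.mpr inferInstance] at this
  exact this.symm
end

section
/- Let G be a nilpotent group. Then G belongs to 𝔜 if and only if G is either abelian, or a finite minimal non-abelian p-group for some prime p (i.e., G is a finite non-abelian group of p-power order all of whose proper subgroups are abelian). -/
open Subgroup Pointwise
open scoped commutatorElement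

universe u
variable {G : Type u} [Group G]

section CalcLemmas
variable {x y z : G}

lemma calcA_nat (hz : ∀ g : G, z * g = g * z) (hxy : x * y = z * (y * x)) :
    ∀ n : ℕ, x ^ n * y = z ^ n * y * x ^ n := by
  have hcz : ∀ g : G, Commute z g := fun g => hz g
  intro n
  induction n with
  | zero => simp
  | succ n ih =>
      calc x ^ (n + 1) * y = x ^ n * (x * y) := by rw [pow_succ, mul_assoc]
        _ = x ^ n * (z * (y * x)) := by rw [hxy]
        _ = (x ^ n * z) * (y * x) := by rw [mul_assoc]
        _ = (z * x ^ n) * (y * x) := by rw [← (hcz (x ^ n)).eq]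
        _ = z * ((x ^ n * y) * x) := by group
        _ = z * ((z ^ n * y * x ^ n) * x) := by rw [ih]
        _ = z ^ (n + 1) * y * x ^ (n + 1) := by
              rw [pow_succ, pow_succ, ← (hcz (z ^ n)).eq]; group

lemma calcA (hz : ∀ g : G, z * g = g * z) (hxy : x * y = z * (y * x)) :
    ∀ i : ℤ, x ^ i * y = z ^ i * (y * x ^ i) := by
  have hcz : ∀ g : G, Commute z g := fun g => hz g
  have hxy' : x⁻¹ * y = z⁻¹ * (y * x⁻¹) := by
    have key : x * (z⁻¹ * (y * x⁻¹)) = y := by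
      calc x * (z⁻¹ * (y * x⁻¹)) = z⁻¹ * (x * y) * x⁻¹ := by
            rw [← mul_assoc, ← (hcz x).inv_left.eq]; group
        _ = z⁻¹ * (z * (y * x)) * x⁻¹ := by rw [hxy]
        _ = y := by group
    calc x⁻¹ * y = x⁻¹ * (x * (z⁻¹ * (y * x⁻¹))) := by rw [key]
      _ = z⁻¹ * (y * x⁻¹) := by group
  have hz' : ∀ g : G, z⁻¹ * g = g * z⁻¹ := fun g => (hcz g).inv_left.eq
  intro i
  rcases Int.natAbs_eq i with h | h
  · rw [h, zpow_natCast, zpow_natCast, calcA_nat hz hxy i.natAbs, mul_assoc]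
  · rw [h]
    have := calcA_nat hz' hxy' i.natAbs
    rw [inv_pow, inv_pow] at this
    rw [zpow_neg, zpow_neg, zpow_natCast, zpow_natCast, this, mul_assoc]

lemma calcB (hz : ∀ g : G, z * g = g * z) (hxy : x * y = z * (y * x)) (i j : ℤ) :
    x ^ i * y ^ j = z ^ (i * j) * (y ^ j * x ^ i) := by
  have hcz : ∀ g : G, Commute z g := fun g => hz g
  have hA := calcA hz hxy i
  have hz' : ∀ g : G, z ^ (-i) * g = g * z ^ (-i) := fun g => ((hcz g).zpow_left (-i)).eq
  have hyx : y * x ^ i = z ^ (-i) * (x ^ i * y) := by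
    rw [hA]; group
  have hB := calcA hz' hyx j
  have hzz : (z ^ (-i)) ^ j = z ^ (-(i * j)) := by rw [← zpow_mul]; ring_nf
  rw [hzz] at hB
  rw [hB]; group

/-- Existential version: move `y`-powers past `x`-powers. -/
lemma calcB' (hz : ∀ g : G, z * g = g * z) (hxy : x * y = z * (y * x)) (i j : ℤ) :
    ∃ e : ℤ, y ^ j * x ^ i = z ^ e * (x ^ i * y ^ j) := by
  refine ⟨-(i * j), ?_⟩
  rw [calcB hz hxy i j]; group

/-- Existential power formula for a product. -/
lemma calcC (hz : ∀ g : G, z * g = g * z) (hxy : x * y = z * (y * x)) (n : ℕ) :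
    ∃ e : ℤ, (x * y) ^ n = z ^ e * (x ^ n * y ^ n) := by
  induction n with
  | zero => exact ⟨0, by simp⟩
  | succ n ih =>
      obtain ⟨e, he⟩ := ih
      obtain ⟨f, hf⟩ := calcB' hz hxy 1 (n : ℤ)
      rw [zpow_one, zpow_natCast] at hf
      refine ⟨e + f, ?_⟩
      calc (x * y) ^ (n+1) = (x * y) ^ n * (x * y) := by rw [pow_succ]
        _ = z ^ e * (x ^ n * ((y ^ n * x) * y)) := by rw [he]; group
        _ = z ^ e * (x ^ n * ((z ^ f * (x * y ^ n)) * y)) := by rw [hf]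
        _ = z ^ e * ((x ^ n * z ^ f) * (x * y ^ n * y)) := by group
        _ = z ^ e * ((z ^ f * x ^ n) * (x * y ^ n * y)) := by
              rw [← ((show Commute z (x ^ n) from hz (x ^ n)).zpow_left f).eq]
        _ = z ^ (e + f) * (x ^ (n+1) * y ^ (n+1)) := by
              rw [pow_succ, pow_succ]; group

lemma calc_ne (hz : ∀ g : G, z * g = g * z) (hxy : x * y = z * (y * x)) {n : ℤ}
    (hn : z ^ n ≠ 1) : x ^ n * y ≠ y * x ^ n := by
  intro h
  have := calcA hz hxy n
  rw [h] at this
  exact hn ((mul_eq_right).mp this.symm)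

end CalcLemmas

/-- Elements of the closure of two commuting elements have a normal form. -/
lemma closure_pair_rep {x y : G} (h : Commute x y) {g : G}
    (hg : g ∈ Subgroup.closure {x, y}) : ∃ s t : ℤ, g = x ^ s * y ^ t := by
  induction hg using Subgroup.closure_induction with
  | mem w hw =>
      rcases hw with rfl | rfl
      · exact ⟨1, 0, by simp⟩
      · exact ⟨0, 1, by simp⟩
  | one => exact ⟨0, 0, by simp⟩
  | mul u v hu hv ihu ihv =>
      obtain ⟨s, t, rfl⟩ := ihu
      obtain ⟨s', t', rfl⟩ := ihv
      refine ⟨s + s', t + t', ?_⟩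
      have hc : y ^ t * x ^ s' = x ^ s' * y ^ t := ((h.symm).zpow_zpow t s').eq
      calc x ^ s * y ^ t * (x ^ s' * y ^ t') = x ^ s * (y ^ t * x ^ s') * y ^ t' := by group
        _ = x ^ s * (x ^ s' * y ^ t) * y ^ t' := by rw [hc]
        _ = x ^ (s + s') * y ^ (t + t') := by rw [zpow_add, zpow_add]; group
  | inv u hu ihu =>
      obtain ⟨s, t, rfl⟩ := ihu
      refine ⟨-s, -t, ?_⟩
      have hc : y ^ (-t) * x ^ (-s) = x ^ (-s) * y ^ (-t) := ((h.symm).zpow_zpow (-t) (-s)).eq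
      rw [mul_inv_rev, ← zpow_neg, ← zpow_neg, hc]

/-- If `y` and `z` commute with `y`, then anything in `closure {y, z}` commutes with `y`. -/
lemma not_mem_closure_pair {x y z : G} (hzy : z * y = y * z) (hxy : x * y ≠ y * x) :
    x ∉ Subgroup.closure {y, z} := by
  intro hx
  have hle : Subgroup.closure {y, z} ≤ Subgroup.centralizer {y} := by
    rw [Subgroup.closure_le]
    rintro w (rfl | rfl) <;> rw [SetLike.mem_coe, Subgroup.mem_centralizer_iff]
    · rintro h ⟨rfl⟩; rfl
    · rintro h ⟨rfl⟩; exact hzy.symm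
  have := Subgroup.mem_centralizer_iff.mp (hle hx) y (by simp)
  exact hxy (by rw [this])

lemma mem_normalizer_of_conj_eq {g : G} {N : Subgroup G}
    (h : Subgroup.map (MulAut.conj g).toMonoidHom N = N) : g ∈ Subgroup.normalizer (N : Set G) := by
  rw [Subgroup.mem_normalizer_iff]
  intro n
  constructor
  · intro hn
    have : (MulAut.conj g).toMonoidHom n ∈ Subgroup.map (MulAut.conj g).toMonoidHom N :=
      Subgroup.mem_map_of_mem _ hn
    rw [h] at this
    simpa [MulAut.conj_apply] using this
  · intro hn
    rw [← h] at hn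
    obtain ⟨m, hm, hEq⟩ := hn
    have : m = n := by
      have := hEq
      simp only [MulEquiv.coe_toMonoidHom, MulAut.conj_apply] at this
      exact mul_left_cancel (mul_right_cancel this)
    rwa [← this]

/-- The subgroup generated by `{y, z}` is normal, where `z` is central,
`x * y = z * (y * x)`, and `closure {x, y} = ⊤`. -/
lemma closure_pair_normal {x y z : G} (hz : ∀ g : G, z * g = g * z)
    (hxy : x * y = z * (y * x)) (htop : Subgroup.closure {x, y} = ⊤) :
    (Subgroup.closure {y, z} : Subgroup G).Normal := by
  set N := Subgroup.closure {y, z} with hN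
  have hzN : z ∈ N := Subgroup.subset_closure (by simp)
  have hyN : y ∈ N := Subgroup.subset_closure (by simp)
  rw [← Subgroup.normalizer_eq_top_iff, eq_top_iff, ← htop, Subgroup.closure_le]
  rintro w (rfl | rfl)
  · -- conj by x
    apply SetLike.mem_coe.mpr
    apply mem_normalizer_of_conj_eq
    have him : (MulAut.conj w).toMonoidHom '' {y, z} = {w * y * w⁻¹, z} := by
      rw [Set.image_pair]
      simp only [MulEquiv.coe_toMonoidHom, MulAut.conj_apply]
      congr 1
      rw [← hz w]; group
    rw [hN, MonoidHom.map_closure, him]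
    have hconj : w * y * w⁻¹ = z * y := by rw [hxy]; group
    rw [hconj]
    apply le_antisymm
    · rw [Subgroup.closure_le]
      rintro v (rfl | rfl)
      · exact mul_mem hzN hyN
      · exact hzN
    · rw [Subgroup.closure_le]
      rintro v (rfl | rfl)
      · have : v = z⁻¹ * (z * v) := by group
        rw [SetLike.mem_coe, this]
        exact mul_mem (inv_mem (Subgroup.subset_closure (by simp)))
          (Subgroup.subset_closure (by simp))
      · exact Subgroup.subset_closure (by simp)
  · -- conj by y
    apply SetLike.mem_coe.mpr
    apply mem_normalizer_of_conj_eq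
    have him : (MulAut.conj w).toMonoidHom '' {w, z} = {w, z} := by
      rw [Set.image_pair]
      simp only [MulEquiv.coe_toMonoidHom, MulAut.conj_apply]
      congr 1
      · group
      · rw [← hz w]; group
    rw [hN, MonoidHom.map_closure, him]

section ML
variable {x y z : G} {N : Subgroup G}

lemma ML (hz : ∀ g : G, z * g = g * z) (hxy : x * y = z * (y * x)) (hz1 : z ≠ 1)
    (hT : ∀ u v : G, u * v ≠ v * u → Subgroup.closure {u, v} = ⊤)
    [hNn : N.Normal] (hyN : y ∈ N) (hzN : z ∈ N) (hxN : x ∉ N) :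
    0 < orderOf z ∧ (orderOf z).Prime ∧
      0 < orderOf (QuotientGroup.mk' N x) ∧ orderOf (QuotientGroup.mk' N x) ≠ 1 ∧
      (∀ n : ℕ, ¬ orderOf z ∣ n → Nat.Coprime (orderOf (QuotientGroup.mk' N x)) n) := by
  set π := QuotientGroup.mk' N with hπ
  set A := π x with hA
  have hA1 : A ≠ 1 := by
    simpa [hA, hπ, QuotientGroup.mk'_apply, QuotientGroup.eq_one_iff] using hxN
  have T2 : ∀ n : ℤ, z ^ n ≠ 1 → ∃ k : ℤ, A ^ (n * k - 1) = 1 := by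
    intro n hn
    have hne := calc_ne hz hxy hn
    have htop := hT _ _ hne
    have h1 : Subgroup.map π (Subgroup.closure {x ^ n, y}) = ⊤ := by
      rw [htop]; exact Subgroup.map_top_of_surjective _ (QuotientGroup.mk'_surjective N)
    rw [MonoidHom.map_closure, Set.image_pair] at h1
    have hy1 : π y = 1 := by
      simpa [hπ, QuotientGroup.mk'_apply, QuotientGroup.eq_one_iff] using hyN
    have hle : Subgroup.closure {π (x ^ n), π y} ≤ Subgroup.zpowers (A ^ n) := by
      rw [Subgroup.closure_le]
      rintro w (rfl | rfl)
      · rw [SetLike.mem_coe, hA, ← map_zpow]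
        exact Subgroup.mem_zpowers _
      · rw [hy1]
        exact one_mem _
    have hAmem : A ∈ Subgroup.zpowers (A ^ n) := hle (h1 ▸ Subgroup.mem_top A)
    obtain ⟨k, hk⟩ := Subgroup.mem_zpowers_iff.mp hAmem
    refine ⟨k, ?_⟩
    rw [zpow_sub, zpow_mul, hk, zpow_one, mul_inv_cancel]
  -- z has finite order
  have hm0 : orderOf z ≠ 0 := by
    intro hm
    have hzo : ∀ n : ℤ, n ≠ 0 → z ^ n ≠ 1 := by
      intro n hn h1
      have := orderOf_dvd_iff_zpow_eq_one.mpr h1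
      rw [hm] at this
      exact hn (by exact_mod_cast zero_dvd_iff.mp (by exact_mod_cast this))
    obtain ⟨k, hk⟩ := T2 2 (hzo 2 (by norm_num))
    have hdvd : (orderOf A : ℤ) ∣ 2 * k - 1 := orderOf_dvd_iff_zpow_eq_one.mpr hk
    have hne0 : 2 * k - 1 ≠ 0 := by omega
    have hA0 : orderOf A ≠ 0 := by
      intro h0
      rw [h0] at hdvd
      exact hne0 (by exact_mod_cast zero_dvd_iff.mp (by exact_mod_cast hdvd))
    obtain ⟨k', hk'⟩ := T2 (orderOf A) (hzo _ (by exact_mod_cast hA0))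
    have hdvd' : (orderOf A : ℤ) ∣ (orderOf A : ℤ) * k' - 1 :=
      orderOf_dvd_iff_zpow_eq_one.mpr hk'
    have : (orderOf A : ℤ) ∣ 1 := (dvd_sub_right (Dvd.intro k' rfl)).mp hdvd'
    have h1 : orderOf A = 1 := by exact_mod_cast Int.eq_one_of_dvd_one (by positivity) this
    exact hA1 (orderOf_eq_one_iff.mp h1)
  have hm : 0 < orderOf z := Nat.pos_of_ne_zero hm0
  have hm1 : orderOf z ≠ 1 := fun h => hz1 (orderOf_eq_one_iff.mp h)
  have hm2 : 2 ≤ orderOf z := by omega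
  set m := orderOf z with hmdef
  have hzn : ∀ n : ℕ, ¬ m ∣ n → z ^ (n : ℤ) ≠ 1 := by
    intro n hn h1
    exact hn (by exact_mod_cast orderOf_dvd_iff_zpow_eq_one.mpr h1)
  -- orderOf A is positive
  have hd0 : orderOf A ≠ 0 := by
    have hmdvd : ¬ m ∣ m + 1 := by
      intro h
      have := Nat.dvd_sub h (dvd_refl m)
      simp at this
      omega
    obtain ⟨k, hk⟩ := T2 (m + 1 : ℕ) (hzn _ hmdvd)
    have hdvd : (orderOf A : ℤ) ∣ ((m : ℤ) + 1) * k - 1 := by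
      push_cast at hk ⊢
      exact orderOf_dvd_iff_zpow_eq_one.mpr hk
    intro h0
    rw [h0] at hdvd
    have h1 : ((m : ℤ) + 1) * k - 1 = 0 := by exact_mod_cast zero_dvd_iff.mp (by exact_mod_cast hdvd)
    have : ((m : ℤ) + 1) ∣ 1 := ⟨k, by linarith⟩
    have := Int.le_of_dvd one_pos this
    have : (2 : ℤ) ≤ (m : ℤ) := by exact_mod_cast hm2
    linarith
  have hd1 : orderOf A ≠ 1 := fun h => hA1 (orderOf_eq_one_iff.mp h)
  -- coprimality
  have hco : ∀ n : ℕ, ¬ m ∣ n → Nat.Coprime (orderOf A) n := by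
    intro n hn
    obtain ⟨k, hk⟩ := T2 n (hzn n hn)
    have hdvd : (orderOf A : ℤ) ∣ (n : ℤ) * k - 1 := orderOf_dvd_iff_zpow_eq_one.mpr hk
    set g := Nat.gcd (orderOf A) n with hg
    have hg1 : (g : ℤ) ∣ (n : ℤ) * k - 1 :=
      dvd_trans (Int.natCast_dvd_natCast.mpr (Nat.gcd_dvd_left _ _)) hdvd
    have hg2 : (g : ℤ) ∣ (n : ℤ) * k :=
      Dvd.dvd.mul_right (Int.natCast_dvd_natCast.mpr (Nat.gcd_dvd_right _ _)) k
    have : (g : ℤ) ∣ 1 := (dvd_sub_right hg2).mp hg1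
    exact_mod_cast Int.eq_one_of_dvd_one (by positivity) this
  -- m is prime
  have hprime : m.Prime := by
    obtain ⟨q, hq, hqd⟩ := Nat.exists_prime_and_dvd hd1
    have hmq : m ∣ q := by
      by_contra hmq
      have hco' := hco q hmq
      rw [Nat.Coprime] at hco'
      have hgcd := Nat.gcd_eq_right hqd
      exact hq.one_lt.ne' (hgcd.symm.trans hco')
    rcases (Nat.Prime.eq_one_or_self_of_dvd hq m hmq) with h | h
    · exact absurd h hm1
    · rwa [h]
  exact ⟨hm, hprime, Nat.pos_of_ne_zero hd0, hd1, hco⟩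

lemma prime_pow_of_coprime {m d : ℕ} (hm : m.Prime) (hd0 : d ≠ 0) 
    (hco : ∀ n : ℕ, ¬ m ∣ n → Nat.Coprime d n) : ∃ α : ℕ, d = m ^ α := by
  refine ⟨d.primeFactorsList.length, Nat.eq_prime_pow_of_unique_prime_dvd hd0 ?_⟩
  intro q hq hqd
  by_contra hne
  have hmq : ¬ m ∣ q := fun h => hne ((Nat.prime_dvd_prime_iff_eq hm hq).mp h).symm
  have hco' := hco q hmq
  rw [Nat.Coprime] at hco'
  have hgcd := Nat.gcd_eq_right hqd
  exact hq.one_lt.ne' (hgcd.symm.trans hco')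

end ML

lemma exists_rep {x y z : G} (hz : ∀ g : G, z * g = g * z) (hxy : x * y = z * (y * x))
    (htop : Subgroup.closure {x, y} = ⊤) (g : G) :
    ∃ k i j : ℤ, g = z ^ k * x ^ i * y ^ j := by
  have zc : ∀ (e : ℤ) (g : G), z ^ e * g = g * z ^ e :=
    fun e g => ((show Commute z g from hz g).zpow_left e).eq
  have hg : g ∈ Subgroup.closure {x, y} := by rw [htop]; trivial
  induction hg using Subgroup.closure_induction with
  | mem w hw =>
      rcases hw with rfl | rfl
      · exact ⟨0, 1, 0, by simp⟩
      · exact ⟨0, 0, 1, by simp⟩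
  | one => exact ⟨0, 0, 0, by simp⟩
  | mul u v hu hv ihu ihv =>
      obtain ⟨k, i, j, rfl⟩ := ihu
      obtain ⟨u', s, t, rfl⟩ := ihv
      obtain ⟨e, he⟩ := calcB' hz hxy s j
      refine ⟨k + u' + e, i + s, j + t, ?_⟩
      calc (z ^ k * x ^ i * y ^ j) * (z ^ u' * x ^ s * y ^ t)
          = z ^ k * x ^ i * (y ^ j * z ^ u') * (x ^ s * y ^ t) := by group
        _ = z ^ k * x ^ i * (z ^ u' * y ^ j) * (x ^ s * y ^ t) := by rw [← zc u' (y ^ j)]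
        _ = z ^ k * (x ^ i * z ^ u') * (y ^ j * (x ^ s * y ^ t)) := by group
        _ = z ^ k * (z ^ u' * x ^ i) * (y ^ j * (x ^ s * y ^ t)) := by rw [← zc u' (x ^ i)]
        _ = z ^ k * z ^ u' * x ^ i * (y ^ j * x ^ s) * y ^ t := by group
        _ = z ^ k * z ^ u' * x ^ i * (z ^ e * (x ^ s * y ^ j)) * y ^ t := by rw [he]
        _ = z ^ k * z ^ u' * (x ^ i * z ^ e) * (x ^ s * (y ^ j * y ^ t)) := by group
        _ = z ^ k * z ^ u' * (z ^ e * x ^ i) * (x ^ s * (y ^ j * y ^ t)) := by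
              rw [← zc e (x ^ i)]
        _ = z ^ (k + u' + e) * x ^ (i + s) * y ^ (j + t) := by
              rw [zpow_add, zpow_add, zpow_add, zpow_add]; group
  | inv u hu ihu =>
      obtain ⟨k, i, j, rfl⟩ := ihu
      obtain ⟨e, he⟩ := calcB' hz hxy (-i) (-j)
      refine ⟨e + -k, -i, -j, ?_⟩
      calc (z ^ k * x ^ i * y ^ j)⁻¹
          = y ^ (-j) * x ^ (-i) * z ^ (-k) := by
            rw [zpow_neg, zpow_neg, zpow_neg]; group
        _ = (z ^ e * (x ^ (-i) * y ^ (-j))) * z ^ (-k) := by rw [he]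
        _ = z ^ e * (x ^ (-i) * (y ^ (-j) * z ^ (-k))) := by group
        _ = z ^ e * (x ^ (-i) * (z ^ (-k) * y ^ (-j))) := by rw [← zc (-k) (y ^ (-j))]
        _ = z ^ e * (x ^ (-i) * z ^ (-k)) * y ^ (-j) := by group
        _ = z ^ e * (z ^ (-k) * x ^ (-i)) * y ^ (-j) := by rw [← zc (-k) (x ^ (-i))]
        _ = z ^ (e + -k) * x ^ (-i) * y ^ (-j) := by rw [zpow_add]; group

lemma KEY2 {x y z : G} (hz : ∀ g : G, z * g = g * z) (hxy : x * y = z * (y * x)) (hz1 : z ≠ 1)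
    (hT : ∀ u v : G, u * v ≠ v * u → Subgroup.closure {u, v} = ⊤)
    (hm : 0 < orderOf z)
    {d r : ℕ} (hd : 0 < d) {ε t : ℤ}
    (heq : x ^ (d : ℤ) = y ^ (ε * ((d * r : ℕ) : ℤ)) * z ^ t) :
    ∃ n : ℕ, 0 < n ∧ y ^ n = 1 := by
  set m := orderOf z with hmdef
  have zc : ∀ (e : ℤ) (g : G), z ^ e * g = g * z ^ e :=
    fun e g => ((show Commute z g from hz g).zpow_left e).eq
  set j : ℤ := -(ε * r) with hjdef
  set w := x * y ^ j with hw
  have hwy : w * y = z * (y * w) := by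
    calc w * y = x * (y ^ j * y) := by rw [hw]; group
      _ = x * (y * y ^ j) := by rw [((Commute.refl y).zpow_left j).eq]
      _ = (x * y) * y ^ j := by group
      _ = (z * (y * x)) * y ^ j := by rw [hxy]
      _ = z * (y * w) := by rw [hw]; group
  have hwyne : w * y ≠ y * w := by
    intro h
    rw [h] at hwy
    exact hz1 (mul_eq_right.mp hwy.symm)
  -- w ^ d is a power of z
  have hj : x * y ^ j = z ^ j * (y ^ j * x) := by
    have h := calcB hz hxy 1 j
    simpa using h
  have hzj : ∀ g : G, z ^ j * g = g * z ^ j := zc j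
  obtain ⟨e, he⟩ := calcC hzj hj d
  have hyjd : (y ^ j) ^ d = y ^ (j * (d : ℤ)) := by
    rw [← zpow_natCast (y ^ j) d, ← zpow_mul]
  have hxd : x ^ d = x ^ (d : ℤ) := by rw [zpow_natCast]
  have hexp : ε * ((d * r : ℕ) : ℤ) + j * (d : ℤ) = 0 := by
    rw [hjdef]; push_cast; ring
  have hzm : z ^ ((m : ℕ) : ℤ) = 1 := by
    rw [zpow_natCast]; exact pow_orderOf_eq_one z
  have hkey : w ^ d = z ^ (j * e + t) := by
    calc w ^ d = (x * y ^ j) ^ d := by rw [hw]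
      _ = (z ^ j) ^ e * (x ^ (d : ℤ) * y ^ (j * (d : ℤ))) := by rw [he, hyjd, hxd]
      _ = (z ^ j) ^ e * (y ^ (ε * ((d * r : ℕ) : ℤ)) * z ^ t * y ^ (j * (d : ℤ))) := by
            rw [heq]
      _ = (z ^ j) ^ e * (y ^ (ε * ((d * r : ℕ) : ℤ)) * (z ^ t * y ^ (j * (d : ℤ)))) := by
            group
      _ = (z ^ j) ^ e * (y ^ (ε * ((d * r : ℕ) : ℤ)) * (y ^ (j * (d : ℤ)) * z ^ t)) := by
            rw [zc t (y ^ (j * (d : ℤ)))]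
      _ = (z ^ j) ^ e * (y ^ (ε * ((d * r : ℕ) : ℤ) + j * (d : ℤ)) * z ^ t) := by
            rw [zpow_add]; group
      _ = (z ^ j) ^ e * (y ^ (0 : ℤ) * z ^ t) := by rw [hexp]
      _ = z ^ (j * e + t) := by rw [zpow_zero, one_mul, ← zpow_mul, ← zpow_add]
  have hwd : w ^ (d * m) = 1 := by
    have h2 : w ^ ((d : ℤ) * (m : ℤ)) = 1 := by
      rw [zpow_mul, zpow_natCast w d, hkey, ← zpow_mul,
        show (j * e + t) * (m : ℤ) = (m : ℤ) * (j * e + t) from mul_comm _ _,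
        zpow_mul, hzm, one_zpow]
    exact_mod_cast h2
  have hwfin : IsOfFinOrder w :=
    isOfFinOrder_iff_pow_eq_one.mpr ⟨d * m, by positivity, hwd⟩
  -- apply ML to the pair (y, w) with central element z⁻¹
  have hywz : y * w = z⁻¹ * (w * y) := by rw [hwy]; group
  have hzinv : ∀ g : G, z⁻¹ * g = g * z⁻¹ := fun g => (show Commute z g from hz g).inv_left.eq
  have htopyw : Subgroup.closure {y, w} = ⊤ := hT y w (fun h => hwyne h.symm)
  haveI hNn : (Subgroup.closure {w, z⁻¹} : Subgroup G).Normal :=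
    closure_pair_normal hzinv hywz htopyw
  have hyNot : y ∉ Subgroup.closure {w, z⁻¹} :=
    not_mem_closure_pair (hzinv w) (fun h => hwyne h.symm)
  have hz1' : z⁻¹ ≠ 1 := fun h => hz1 (by rwa [inv_eq_one] at h)
  obtain ⟨-, -, he'pos, -, -⟩ := ML hzinv hywz hz1' hT
    (Subgroup.subset_closure (by simp)) (Subgroup.subset_closure (by simp)) hyNot
  set e' := orderOf (QuotientGroup.mk' (Subgroup.closure {w, z⁻¹}) y) with he'def
  have hye' : y ^ e' ∈ Subgroup.closure {w, z⁻¹} := by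
    have h := pow_orderOf_eq_one (QuotientGroup.mk' (Subgroup.closure {w, z⁻¹}) y)
    rw [← map_pow, QuotientGroup.mk'_apply] at h
    exact (QuotientGroup.eq_one_iff _).mp h
  obtain ⟨s', t', hrep⟩ := closure_pair_rep (show Commute w z⁻¹ from (hzinv w).symm) hye'
  set ow := orderOf w with howdef
  have how : 0 < ow := hwfin.orderOf_pos
  refine ⟨e' * (ow * m), by positivity, ?_⟩
  have h1 : y ^ ((e' : ℤ) * ((ow * m : ℕ) : ℤ)) = 1 := by
    rw [zpow_mul, zpow_natCast y e', hrep]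
    have hcom : Commute (w ^ s') (z⁻¹ ^ t') :=
      ((show Commute z w from hz w).inv_left.zpow_zpow t' s').symm
    rw [hcom.mul_zpow, ← zpow_mul, ← zpow_mul]
    have hw1 : w ^ (s' * ((ow * m : ℕ) : ℤ)) = 1 := by
      apply orderOf_dvd_iff_zpow_eq_one.mp
      have hh : (ow : ℤ) ∣ ((ow * m : ℕ) : ℤ) := by
        exact_mod_cast Int.natCast_dvd_natCast.mpr ⟨m, rfl⟩
      exact hh.mul_left s'
    have hz2 : z⁻¹ ^ (t' * ((ow * m : ℕ) : ℤ)) = 1 := by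
      apply orderOf_dvd_iff_zpow_eq_one.mp
      rw [orderOf_inv]
      have hh : (m : ℤ) ∣ ((ow * m : ℕ) : ℤ) := by
        exact_mod_cast Int.natCast_dvd_natCast.mpr ⟨ow, mul_comm ow m⟩
      exact hh.mul_left t'
    rw [hw1, hz2, one_mul]
  exact_mod_cast h1

lemma map_lcs_eq {G : Type u} {G' : Type*} [Group G] [Group G'] (f : G →* G')
    (hf : Function.Surjective f) (n : ℕ) :
    Subgroup.map f (Subgroup.lowerCentralSeries (⊤ : Subgroup G) n) = Subgroup.lowerCentralSeries (⊤ : Subgroup G') n := by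
  induction n with
  | zero => simpa using Subgroup.map_top_of_surjective f hf
  | succ n ih =>
      show Subgroup.map f ⁅Subgroup.lowerCentralSeries (⊤ : Subgroup G) n, ⊤⁆ = ⁅Subgroup.lowerCentralSeries (⊤ : Subgroup G') n, ⊤⁆
      rw [Subgroup.map_commutator, ih, Subgroup.map_top_of_surjective f hf]

lemma comm_central {G : Type u} [Group G] {z w : G} (hz : z ∈ Subgroup.center G)
    (hw : w ∈ Subgroup.center G) (g k : G) : ⁅g * z, k * w⁆ = ⁅g, k⁆ := by
  have hz' := Subgroup.mem_center_iff.mp hz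
  have hw' := Subgroup.mem_center_iff.mp hw
  have cz : ∀ x : G, z * x * z⁻¹ = x := fun x => by rw [← hz' x]; group
  have cw : ∀ x : G, w * x * w⁻¹ = x := fun x => by rw [← hw' x]; group
  have e1 : ⁅g * z, k * w⁆ = g * (z * (k * w) * z⁻¹) * g⁻¹ * (k * w)⁻¹ := by group
  rw [e1, cz (k * w)]
  have e2 : g * (k * w) * g⁻¹ * (k * w)⁻¹ = g * k * (w * g⁻¹ * w⁻¹) * k⁻¹ := by group
  rw [e2, cw g⁻¹]
  group

lemma nakayama (n : ℕ) : ∀ {G : Type u} [Group G], Subgroup.lowerCentralSeries (⊤ : Subgroup G) n = ⊥ →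
    ∀ H : Subgroup G, H ⊔ _root_.commutator G = ⊤ → H = ⊤ := by
  induction n with
  | zero =>
      intro G _ hn H _
      rw [eq_top_iff]
      intro x _
      have : x ∈ Subgroup.lowerCentralSeries (⊤ : Subgroup G) 0 := by simp
      rw [hn] at this
      simp only [Subgroup.mem_bot] at this
      rw [this]; exact H.one_mem
  | succ n ih =>
      intro G _ hn H hH
      set Z := Subgroup.lowerCentralSeries (⊤ : Subgroup G) n with hZdef
      have hZc : Z ≤ Subgroup.center G := by
        have : (⁅Z, (⊤ : Subgroup G)⁆ : Subgroup G) = ⊥ := hn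
        simpa using (Subgroup.commutator_eq_bot_iff_le_centralizer.mp this).trans
          (le_of_eq (by rw [Subgroup.coe_top, Subgroup.centralizer_univ]))
      haveI : Z.Normal := by infer_instance
      set π := QuotientGroup.mk' Z
      have hsurj : Function.Surjective π := QuotientGroup.mk'_surjective Z
      have hq : Subgroup.lowerCentralSeries (⊤ : Subgroup (G ⧸ Z)) n = ⊥ := by
        rw [← map_lcs_eq π hsurj n, ← hZdef, Subgroup.map_eq_bot_iff, QuotientGroup.ker_mk']
      have hH' : Subgroup.map π H ⊔ _root_.commutator (G ⧸ Z) = ⊤ := by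
        rw [_root_.commutator_def, ← Subgroup.map_top_of_surjective π hsurj,
          ← Subgroup.map_commutator, ← Subgroup.map_sup, ← _root_.commutator_def, hH,
          Subgroup.map_top_of_surjective π hsurj]
      have htop := ih hq _ hH'
      have hHZ : H ⊔ Z = ⊤ := by
        have := congrArg (Subgroup.comap π) htop
        rwa [Subgroup.comap_map_eq, QuotientGroup.ker_mk', Subgroup.comap_top] at this
      have hcomm : _root_.commutator G ≤ H := by
        rw [_root_.commutator_def, Subgroup.commutator_le]
        intro g₁ _ g₂ _
        have h1 : g₁ ∈ (↑(H ⊔ Z) : Set G) := by rw [hHZ]; trivial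
        have h2 : g₂ ∈ (↑(H ⊔ Z) : Set G) := by rw [hHZ]; trivial
        rw [Subgroup.mul_normal] at h1 h2
        obtain ⟨x1, hx1, z1, hz1, rfl⟩ := h1
        obtain ⟨x2, hx2, z2, hz2, rfl⟩ := h2
        rw [comm_central (hZc hz1) (hZc hz2), commutatorElement_def]
        exact mul_mem (mul_mem (mul_mem hx1 hx2) (inv_mem hx1)) (inv_mem hx2)
      rw [← hH, sup_eq_left.mpr hcomm]
lemma finOrder_of_zpow {g : G} {k : ℤ} (hk : k ≠ 0) (h : g ^ k = 1) : IsOfFinOrder g := by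
  refine isOfFinOrder_iff_pow_eq_one.mpr ⟨k.natAbs, Int.natAbs_pos.mpr hk, ?_⟩
  have : g ^ ((k.natAbs : ℤ)) = 1 := by
    rcases Int.natAbs_eq k with h' | h'
    · rw [← h']; exact h
    · rw [show ((k.natAbs : ℤ)) = -k by omega, zpow_neg, h, inv_one]
  exact_mod_cast this

lemma tors_of_eq {x h k : G} {n : ℕ} (hn : 0 < n) {s t : ℤ} (hcom : Commute h k)
    (heq : x ^ n = h ^ s * k ^ t) (hh : IsOfFinOrder h) (hk : IsOfFinOrder k) :
    IsOfFinOrder x := by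
  set K := orderOf h * orderOf k with hK
  have hKpos : 0 < K := by
    have := hh.orderOf_pos
    have := hk.orderOf_pos
    positivity
  refine isOfFinOrder_iff_pow_eq_one.mpr ⟨n * K, by positivity, ?_⟩
  rw [pow_mul, heq, (hcom.zpow_zpow s t).mul_pow, ← zpow_natCast (h ^ s) K,
    ← zpow_natCast (k ^ t) K, ← zpow_mul, ← zpow_mul]
  have h1 : h ^ (s * (K : ℤ)) = 1 := by
    apply orderOf_dvd_iff_zpow_eq_one.mp
    have : (orderOf h : ℤ) ∣ (K : ℤ) := by
      exact_mod_cast Int.natCast_dvd_natCast.mpr ⟨orderOf k, rfl⟩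
    exact this.mul_left s
  have h2 : k ^ (t * (K : ℤ)) = 1 := by
    apply orderOf_dvd_iff_zpow_eq_one.mp
    have : (orderOf k : ℤ) ∣ (K : ℤ) := by
      exact_mod_cast Int.natCast_dvd_natCast.mpr ⟨orderOf h, mul_comm _ _⟩
    exact this.mul_left t
  rw [h1, h2, one_mul]

lemma mainY (hnil : Group.IsNilpotent G)
    (habel : ∀ H : Subgroup G, H ≠ ⊤ → ∀ u ∈ H, ∀ v ∈ H, u * v = v * u)
    {a b : G} (hab : a * b ≠ b * a) :
    Finite G ∧ ∃ p : ℕ, p.Prime ∧ IsPGroup p G := by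
  classical
  have hT : ∀ u v : G, u * v ≠ v * u → Subgroup.closure {u, v} = ⊤ := by
    intro u v huv
    by_contra h
    exact huv (habel _ h u (Subgroup.subset_closure (by simp)) v
      (Subgroup.subset_closure (by simp)))
  obtain ⟨nn, hnn⟩ := Subgroup.nilpotent_iff_lowerCentralSeries.mp hnil
  -- every commutator is central
  have hcent : ∀ u v g : G, (u * v * u⁻¹ * v⁻¹) * g = g * (u * v * u⁻¹ * v⁻¹) := by
    intro u v g
    by_contra hne
    have h1 : Subgroup.closure {u * v * u⁻¹ * v⁻¹, g} = ⊤ := hT _ _ hne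
    have h2 : Subgroup.closure {g} ⊔ _root_.commutator G = ⊤ := by
      rw [eq_top_iff, ← h1, Subgroup.closure_le]
      rintro w (rfl | rfl)
      · apply SetLike.le_def.mp le_sup_right
        rw [_root_.commutator_def]
        exact Subgroup.commutator_mem_commutator (Subgroup.mem_top u) (Subgroup.mem_top v)
      · exact SetLike.le_def.mp le_sup_left (Subgroup.subset_closure (by simp))
    have h3 := nakayama nn hnn _ h2
    have ha : a ∈ Subgroup.zpowers g := by
      rw [Subgroup.zpowers_eq_closure, h3]; trivial
    have hb : b ∈ Subgroup.zpowers g := by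
      rw [Subgroup.zpowers_eq_closure, h3]; trivial
    obtain ⟨i, hi⟩ := Subgroup.mem_zpowers_iff.mp ha
    obtain ⟨j, hj⟩ := Subgroup.mem_zpowers_iff.mp hb
    exact hab (by rw [← hi, ← hj, ← zpow_add, ← zpow_add, add_comm])
  set c := a * b * a⁻¹ * b⁻¹ with hc
  have hz : ∀ g : G, c * g = g * c := hcent a b
  have hab2 : a * b = c * (b * a) := by rw [hc]; group
  have hc1 : c ≠ 1 := by
    intro h
    have hc' : ⁅a, b⁆ = 1 := by rw [commutatorElement_def]; exact h
    exact hab (commutatorElement_eq_one_iff_commute.mp hc')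
  have htopab : Subgroup.closure {a, b} = ⊤ := hT a b hab
  have hba : b * a = c⁻¹ * (a * b) := by rw [hab2]; group
  have hcinv : ∀ g : G, c⁻¹ * g = g * c⁻¹ := fun g => (show Commute c g from hz g).inv_left.eq
  have hc1' : c⁻¹ ≠ 1 := fun h => hc1 (by rwa [inv_eq_one] at h)
  have htopba : Subgroup.closure {b, a} = ⊤ := hT b a (fun h => hab h.symm)
  haveI hSbN : (Subgroup.closure {b, c} : Subgroup G).Normal :=
    closure_pair_normal hz hab2 htopab
  haveI hSaN : (Subgroup.closure {a, c⁻¹} : Subgroup G).Normal :=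
    closure_pair_normal hcinv hba htopba
  have haNot : a ∉ Subgroup.closure {b, c} := not_mem_closure_pair (hz b) hab
  have hbNot : b ∉ Subgroup.closure {a, c⁻¹} :=
    not_mem_closure_pair (hcinv a) (fun h => hab h.symm)
  obtain ⟨hm0, hp0, hd0, hd1, hdco⟩ := ML hz hab2 hc1 hT
    (Subgroup.subset_closure (by simp)) (Subgroup.subset_closure (by simp)) haNot
  obtain ⟨hm0', hp0', he0, he1, heco⟩ := ML hcinv hba hc1' hT
    (Subgroup.subset_closure (by simp)) (Subgroup.subset_closure (by simp)) hbNot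
  rw [orderOf_inv] at hm0' hp0' heco
  set m := orderOf c with hm
  set d := orderOf (QuotientGroup.mk' (Subgroup.closure {b, c}) a) with hd
  set e := orderOf (QuotientGroup.mk' (Subgroup.closure {a, c⁻¹}) b) with he
  obtain ⟨α, hdα⟩ := prime_pow_of_coprime hp0 (by omega) hdco
  obtain ⟨β, heβ⟩ := prime_pow_of_coprime hp0' (by omega) heco
  -- representation equations
  have had : a ^ d ∈ Subgroup.closure {b, c} := by
    have h := pow_orderOf_eq_one (QuotientGroup.mk' (Subgroup.closure {b, c}) a)
    rw [← map_pow, QuotientGroup.mk'_apply] at h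
    exact (QuotientGroup.eq_one_iff _).mp h
  obtain ⟨s, t, hast⟩ := closure_pair_rep (show Commute b c from (hz b).symm) had
  have hbe : b ^ e ∈ Subgroup.closure {a, c⁻¹} := by
    have h := pow_orderOf_eq_one (QuotientGroup.mk' (Subgroup.closure {a, c⁻¹}) b)
    rw [← map_pow, QuotientGroup.mk'_apply] at h
    exact (QuotientGroup.eq_one_iff _).mp h
  obtain ⟨u, v, hbeuv⟩ := closure_pair_rep (show Commute a c⁻¹ from (hcinv a).symm) hbe
  -- divisibility
  have div1 : (e : ℤ) ∣ s := by
    have h1 : QuotientGroup.mk' (Subgroup.closure {a, c⁻¹}) (a ^ d) = 1 := by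
      rw [QuotientGroup.mk'_apply, QuotientGroup.eq_one_iff]
      exact pow_mem (Subgroup.subset_closure (by simp)) d
    rw [hast, map_mul, map_zpow, map_zpow] at h1
    have hc2 : QuotientGroup.mk' (Subgroup.closure {a, c⁻¹}) c = 1 := by
      rw [QuotientGroup.mk'_apply, QuotientGroup.eq_one_iff]
      have : c⁻¹ ∈ Subgroup.closure {a, c⁻¹} := Subgroup.subset_closure (by simp)
      simpa using inv_mem this
    rw [hc2, one_zpow, mul_one] at h1
    exact orderOf_dvd_iff_zpow_eq_one.mpr h1
  have div2 : (d : ℤ) ∣ u := by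
    have h1 : QuotientGroup.mk' (Subgroup.closure {b, c}) (b ^ e) = 1 := by
      rw [QuotientGroup.mk'_apply, QuotientGroup.eq_one_iff]
      exact pow_mem (Subgroup.subset_closure (by simp)) e
    rw [hbeuv, map_mul, map_zpow, map_zpow] at h1
    have hc2 : QuotientGroup.mk' (Subgroup.closure {b, c}) c⁻¹ = 1 := by
      rw [QuotientGroup.mk'_apply, QuotientGroup.eq_one_iff]
      exact inv_mem (Subgroup.subset_closure (by simp))
    rw [hc2, one_zpow, mul_one] at h1
    exact orderOf_dvd_iff_zpow_eq_one.mpr h1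
  have hcm : c ^ ((m : ℕ) : ℤ) = 1 := by
    rw [zpow_natCast]; exact pow_orderOf_eq_one c
  have hfc : IsOfFinOrder c := orderOf_pos_iff.mp hm0
  -- main case distinction: get IsOfFinOrder a ∧ IsOfFinOrder b
  have hfab : IsOfFinOrder a ∧ IsOfFinOrder b := by
    by_cases hcase : (d : ℤ) * (e : ℤ) = u * s
    case neg =>
      -- good case
      have e1 : a ^ ((d : ℤ) * e) = (b ^ s * c ^ t) ^ (e : ℤ) := by
        rw [zpow_mul, zpow_natCast a d, hast]
      have e2 : (b ^ s * c ^ t) ^ (e : ℤ) = b ^ (s * (e : ℤ)) * c ^ (t * (e : ℤ)) := by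
        rw [((show Commute b c from (hz b).symm).zpow_zpow s t).mul_zpow (e : ℤ),
          ← zpow_mul, ← zpow_mul]
      have e3 : b ^ (s * (e : ℤ)) = (a ^ u * c⁻¹ ^ v) ^ s := by
        rw [show s * (e : ℤ) = (e : ℤ) * s from mul_comm _ _, zpow_mul, zpow_natCast b e, hbeuv]
      have e4 : (a ^ u * c⁻¹ ^ v) ^ s = a ^ (u * s) * c ^ (-(v * s)) := by
        rw [((show Commute a c⁻¹ from (hcinv a).symm).zpow_zpow u v).mul_zpow s,
          ← zpow_mul, ← zpow_mul, inv_zpow, ← zpow_neg]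
      have h1 : a ^ ((d : ℤ) * e) = a ^ (u * s) * c ^ (-(v * s) + t * (e : ℤ)) := by
        rw [e1, e2, e3, e4, mul_assoc, ← zpow_add]
      have key : a ^ ((d : ℤ) * e - u * s) = c ^ (-(v * s) + t * (e : ℤ)) := by
        have e5 : a ^ ((d : ℤ) * e - u * s) = a ^ (-(u * s)) * a ^ ((d : ℤ) * e) := by
          rw [← zpow_add]; ring_nf
        rw [e5, h1, ← mul_assoc, ← zpow_add, neg_add_cancel, zpow_zero, one_mul]
      have hKne : (d : ℤ) * e - u * s ≠ 0 := fun h => hcase (by omega)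
      have ha1 : a ^ (((d : ℤ) * e - u * s) * m) = 1 := by
        rw [zpow_mul, key, ← zpow_mul,
          show (-(v * s) + t * (e : ℤ)) * (m : ℤ) = (m : ℤ) * (-(v * s) + t * (e : ℤ)) from
            mul_comm _ _, zpow_mul, hcm, one_zpow]
      have hfa : IsOfFinOrder a := finOrder_of_zpow (by
        intro h
        rcases mul_eq_zero.mp h with h | h
        · exact hKne h
        · omega) ha1
      have hfb : IsOfFinOrder b :=
        tors_of_eq he0 (show Commute a c⁻¹ from (hcinv a).symm) hbeuv hfa hfc.inv
      exact ⟨hfa, hfb⟩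
    case pos =>
      obtain ⟨s₁, hs₁⟩ := div1
      obtain ⟨u₁, hu₁⟩ := div2
      have hde0 : (d : ℤ) * (e : ℤ) ≠ 0 := by positivity
      have hu₁s₁ : u₁ * s₁ = 1 := by
        apply mul_left_cancel₀ hde0
        rw [mul_one]
        calc (d : ℤ) * (e : ℤ) * (u₁ * s₁) = ((d : ℤ) * u₁) * ((e : ℤ) * s₁) := by ring
          _ = u * s := by rw [← hu₁, ← hs₁]
          _ = (d : ℤ) * e := hcase.symm
      have hεcases := Int.mul_eq_one_iff_eq_one_or_neg_one.mp hu₁s₁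
      have hεeq : u₁ = s₁ := by rcases hεcases with ⟨h1, h2⟩ | ⟨h1, h2⟩ <;> rw [h1, h2]
      rcases le_total α β with hle | hle
      · -- d ∣ e, apply KEY2 to (a, b, c)
        set r := m ^ (β - α) with hr
        have her : e = d * r := by
          rw [hdα, heβ, hr, ← pow_add]
          congr 1
          omega
        have heq' : a ^ (d : ℤ) = b ^ (s₁ * ((d * r : ℕ) : ℤ)) * c ^ t := by
          rw [zpow_natCast, hast]
          congr 2
          rw [hs₁, her]
          push_cast
          ring
        obtain ⟨n, hn, hbn⟩ := KEY2 hz hab2 hc1 hT hm0 (by omega) heq'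
        have hfb : IsOfFinOrder b := isOfFinOrder_iff_pow_eq_one.mpr ⟨n, hn, hbn⟩
        have hfa : IsOfFinOrder a :=
          tors_of_eq hd0 (show Commute b c from (hz b).symm) hast hfb hfc
        exact ⟨hfa, hfb⟩
      · -- e ∣ d, apply KEY2 to (b, a, c⁻¹)
        set r := m ^ (α - β) with hr
        have her : d = e * r := by
          rw [hdα, heβ, hr, ← pow_add]
          congr 1
          omega
        have heq' : b ^ (e : ℤ) = a ^ (u₁ * ((e * r : ℕ) : ℤ)) * c⁻¹ ^ v := by
          rw [zpow_natCast, hbeuv]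
          congr 2
          rw [hu₁, her]
          push_cast
          ring
        obtain ⟨n, hn, han⟩ := KEY2 hcinv hba hc1' hT (by rwa [orderOf_inv]) (by omega) heq'
        have hfa : IsOfFinOrder a := isOfFinOrder_iff_pow_eq_one.mpr ⟨n, hn, han⟩
        have hfb : IsOfFinOrder b :=
          tors_of_eq he0 (show Commute a c⁻¹ from (hcinv a).symm) hbeuv hfa hfc.inv
        exact ⟨hfa, hfb⟩
  obtain ⟨hfa, hfb⟩ := hfab
  -- finiteness
  haveI hfinite : Finite G := by
    have huniv : (Set.univ : Set G) ⊆
        (Subgroup.zpowers c : Set G) * (Subgroup.zpowers a : Set G)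
          * (Subgroup.zpowers b : Set G) := by
      intro g _
      obtain ⟨k, i, j, rfl⟩ := exists_rep hz hab2 htopab g
      exact Set.mul_mem_mul (Set.mul_mem_mul ⟨k, rfl⟩ ⟨i, rfl⟩) ⟨j, rfl⟩
    exact Set.finite_univ_iff.mp (Set.Finite.subset
      ((hfc.finite_zpowers.mul hfa.finite_zpowers).mul hfb.finite_zpowers) huniv)
  refine ⟨hfinite, ?_⟩
  -- p-group via Sylow theory
  have hfinal : ∃ (p : ℕ) (_ : p.Prime) (P : Sylow p G), (P : Subgroup G) = ⊤ := by
    by_contra hno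
    push_neg at hno
    obtain ⟨e0⟩ := ((isNilpotent_of_finite_tfae (G := G)).out 0 4).mp hnil
    have hcomm : ∀ ξ η : (∀ p : (Nat.card G).primeFactors, ∀ P : Sylow (↑p) G, (↑P : Subgroup G)),
        ξ * η = η * ξ := by
      intro ξ η
      funext p P
      have hp : Nat.Prime (↑p : ℕ) := Nat.prime_of_mem_primeFactors p.2
      apply Subtype.ext
      exact habel (P : Subgroup G) (hno ↑p hp P) _ (SetLike.coe_mem _) _ (SetLike.coe_mem _)
    apply hab
    have h2 := hcomm (e0.symm a) (e0.symm b)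
    have h3 := congrArg e0 h2
    simpa [map_mul] using h3
  obtain ⟨p, hp, P, hPtop⟩ := hfinal
  refine ⟨p, hp, ?_⟩
  haveI : Fact p.Prime := ⟨hp⟩
  have h1 : IsPGroup p (P : Subgroup G) := P.isPGroup'
  rw [hPtop] at h1
  exact h1.of_equiv Subgroup.topEquiv

theorem stmt_7 {G : Type*} [Group G] (hG : Group.IsNilpotent G) :
    IsY G ↔ (∀ a b : G, a * b = b * a) ∨
      (Finite G ∧ (∃ a b : G, a * b ≠ b * a) ∧ ∃ p : ℕ, p.Prime ∧ IsPGroup p G ∧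
        ∀ H : Subgroup G, H ≠ ⊤ → ∀ a ∈ H, ∀ b ∈ H, a * b = b * a) := by
  constructor
  · intro hY
    by_cases hab : ∀ u v : G, u * v = v * u
    · exact Or.inl hab
    · right
      push_neg at hab
      obtain ⟨a, b, hab⟩ := hab
      haveI := hG
      have hNC : NormalizerCondition G := normalizerCondition_of_isNilpotent
      have habel : ∀ H : Subgroup G, H ≠ ⊤ → ∀ u ∈ H, ∀ v ∈ H, u * v = v * u := by
        intro H hH u hu v hv
        by_contra hne
        exact hH ((normalizerCondition_iff_only_full_group_self_normalizing.mp hNC) H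
          (hY H ⟨u, hu, v, hv, hne⟩))
      obtain ⟨hfin, p, hp, hPG⟩ := mainY hG habel hab
      exact ⟨hfin, ⟨a, b, hab⟩, p, hp, hPG, habel⟩
  · rintro (hcomm | ⟨hfin, ⟨a, b, hab⟩, p, hp, hPG, habel⟩)
    · rintro H ⟨u, hu, v, hv, hne⟩
      exact absurd (hcomm u v) hne
    · rintro H ⟨u, hu, v, hv, hne⟩
      have hH : H = ⊤ := by
        by_contra h
        exact hne (habel H h u hu v hv)
      rw [hH]
      exact Subgroup.normalizer_eq_top_iff.mpr inferInstance
end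

section
/- Let p be a prime, let A be an additively written abelian group, and let θ be an automorphism of A of order exactly p. If the endomorphism of A given by a ↦ a − θ(a) is surjective, then A = pA, i.e., A is p-divisible: every element of A is p times some element of A. -/
open Polynomial

theorem stmt_10 {A : Type*} [AddCommGroup A] (p : ℕ) (hp : p.Prime)
    (θ : AddAut A) (hθ : addOrderOf θ = p)
    (hsurj : Function.Surjective (fun a : A => a - θ a)) :
    ∀ a : A, ∃ b : A, a = p • b := by
  haveI : Fact p.Prime := ⟨hp⟩
  set t : AddMonoid.End A := (θ : AddAut A).toAddMonoidHom with ht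
  have hpow : ∀ (n : ℕ) (a : A), (n • θ) a = (t ^ n) a := by
    intro n
    induction n with
    | zero => intro a; simp [ht]; rfl
    | succ n ih =>
      intro a
      rw [succ_nsmul, pow_succ]
      show (n • θ) (θ a) = (t ^ n) (t a)
      rw [ih (θ a)]
      rfl
  have htp : t ^ p = 1 := by
    refine AddMonoidHom.ext fun a => ?_
    refine (hpow p a).symm.trans ?_
    rw [← hθ, addOrderOf_nsmul_eq_zero]
    rfl
  -- polynomial identity
  set d : ℤ[X] := (1 - X) ^ p - (1 - X ^ p) with hd
  have hdvd : C (p : ℤ) ∣ d := by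
    rw [Polynomial.C_dvd_iff_dvd_coeff]
    intro n
    have hmap : d.map (Int.castRingHom (ZMod p)) = 0 := by
      simp only [hd, Polynomial.map_sub, Polynomial.map_pow, Polynomial.map_one,
        Polynomial.map_X]
      rw [sub_pow_char]
      ring
    have := congrArg (fun q => Polynomial.coeff q n) hmap
    simp only [Polynomial.coeff_map, Polynomial.coeff_zero] at this
    exact_mod_cast (ZMod.intCast_zmod_eq_zero_iff_dvd _ p).mp this
  obtain ⟨g, hg⟩ := hdvd
  have key : (1 - t) ^ p = (p : AddMonoid.End A) * Polynomial.aeval t g := by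
    have := congrArg (Polynomial.aeval t) hg
    simp only [hd, map_sub, map_pow, map_one, map_mul, Polynomial.aeval_X,
      Polynomial.aeval_C] at this
    rw [htp, sub_self, sub_zero] at this
    rw [this]
    norm_num
  -- surjectivity of (1 - t)^p
  have hsurj1 : Function.Surjective ⇑(1 - t) := by
    have : ⇑(1 - t) = fun a : A => a - θ a := by
      funext a; simp [ht, AddMonoidHom.sub_apply]; rfl
    rw [this]; exact hsurj
  have hsurjp : ∀ n : ℕ, Function.Surjective ⇑((1 - t) ^ n) := by
    intro n
    induction n with
    | zero => simpa using Function.surjective_id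
    | succ n ih =>
      rw [pow_succ]
      have h2 : ⇑((1 - t) ^ n * (1 - t)) = ⇑((1 - t) ^ n) ∘ ⇑(1 - t) := rfl
      rw [h2]
      exact ih.comp hsurj1
  intro a
  obtain ⟨c, hc⟩ := hsurjp p a
  refine ⟨Polynomial.aeval t g c, ?_⟩
  rw [← hc, key]
  show (p : AddMonoid.End A) ((Polynomial.aeval t g) c) = _
  simp
end

section
/- Let p be a prime and let G be a group with a non-trivial abelian normal subgroup A that is free abelian of finite rank (i.e., isomorphic to ℤ^n for some n ≥ 1) and an element x such that G is generated by x together with A, the cyclic subgroup ⟨x⟩ intersects A trivially, x^p commutes with every element of A, and conjugation by x fixes no non-trivial element of A. Then G does not belong to 𝔜. -/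
lemma keyEnd {n p : ℕ} (hn : 1 ≤ n) (hp : p.Prime)
    (t : AddMonoid.End (Fin n → ℤ)) (htp : t ^ p = 1) :
    ∃ v : Fin n → ℤ, ∀ w, t w - w ≠ v := by
  by_contra h
  push_neg at h
  set f : AddMonoid.End (Fin n → ℤ) := t - 1 with hf
  have hfw : ∀ w, f w = t w - w := fun w => rfl
  have hsurj : Function.Surjective f := by
    intro v; obtain ⟨w, hw⟩ := h v; exact ⟨w, by rw [hfw, hw]⟩
  have hsurjp : ∀ k : ℕ, Function.Surjective (⇑(f ^ k) : (Fin n → ℤ) → (Fin n → ℤ)) := by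
    intro k
    induction k with
    | zero => simp [Function.Surjective]
    | succ k ih =>
      rw [pow_succ]
      have : ⇑(f ^ k * f) = ⇑(f ^ k) ∘ ⇑f := rfl
      rw [this]
      exact ih.comp hsurj
  have hcomm : Commute t (-1 : AddMonoid.End (Fin n → ℤ)) :=
    (Commute.one_right t).neg_right
  obtain ⟨M₀, hM₀⟩ := hcomm.exists_add_pow_prime_eq hp
  obtain ⟨M, hM⟩ : ∃ M, (t + -1 : AddMonoid.End (Fin n → ℤ)) ^ p = t ^ p + (-1) ^ p + ↑p * M :=
    ⟨t * -1 * M₀, by rw [hM₀]; simp only [mul_assoc]⟩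
  have hfp : f = t + -1 := by rw [hf, sub_eq_add_neg]
  have hMw : ∀ w, (f ^ p) w = w + ((-1 : AddMonoid.End (Fin n → ℤ)) ^ p) w + p • M w := by
    intro w
    rw [hfp]
    have := DFunLike.congr_fun hM w
    rw [this]
    have h1 : ((t ^ p + (-1) ^ p + ↑p * M) : AddMonoid.End (Fin n → ℤ)) w
        = (t ^ p) w + ((-1 : AddMonoid.End (Fin n → ℤ)) ^ p) w + (↑p * M) w := rfl
    rw [h1, htp]
    rfl
  have hpw : ∀ w, ∃ u, (f ^ p) w = p • u := by
    intro w
    rcases hp.eq_two_or_odd' with h2 | hodd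
    · subst h2
      refine ⟨w + M w, ?_⟩
      have hsq : (-1 : AddMonoid.End (Fin n → ℤ)) ^ 2 = 1 := by
        have := Odd.neg_one_pow (α := AddMonoid.End (Fin n → ℤ)) (by norm_num : Odd 1)
        rw [pow_two]; rw [pow_one] at this; rw [this]; simp
      rw [hMw, hsq, AddMonoid.End.one_apply, smul_add, two_smul]
      abel
    · refine ⟨M w, ?_⟩
      have hop : (-1 : AddMonoid.End (Fin n → ℤ)) ^ p = -1 :=
        Odd.neg_one_pow (α := AddMonoid.End (Fin n → ℤ)) hodd
      rw [hMw, hop]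
      have : ((-1 : AddMonoid.End (Fin n → ℤ))) w = -w := rfl
      rw [this]
      abel
  obtain ⟨w, hw⟩ := hsurjp p (Pi.single ⟨0, hn⟩ 1)
  obtain ⟨u, hu⟩ := hpw w
  rw [hw] at hu
  have h1 : (1 : ℤ) = p * u ⟨0, hn⟩ := by
    have := congrFun hu ⟨0, hn⟩
    simpa using this
  have hdvd : (p : ℤ) ∣ 1 := ⟨u ⟨0, hn⟩, h1⟩
  have : p ∣ 1 := by exact_mod_cast hdvd
  have h3 := Nat.dvd_one.mp this
  have h4 := hp.two_le
  omega

theorem stmt_11 {G : Type*} [Group G] (p : ℕ) (hp : p.Prime)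
    (A : Subgroup G) (hA : A.Normal) (hnt : A ≠ ⊥)
    (hfree : ∃ n : ℕ, 1 ≤ n ∧ Nonempty (A ≃* Multiplicative (Fin n → ℤ)))
    (x : G)
    (hgen : Subgroup.closure {x} ⊔ A = ⊤)
    (hint : Subgroup.zpowers x ⊓ A = ⊥)
    (hxp : ∀ a ∈ A, x ^ p * a = a * x ^ p)
    (hfpf : ∀ a ∈ A, x * a * x⁻¹ = a → a = 1) :
    ¬ IsY G := by
  intro hY
  obtain ⟨n, hn, ⟨e⟩⟩ := hfree
  -- the embedding of `Fin n → ℤ` into G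
  set φ : (Fin n → ℤ) → G := fun v => ((e.symm (Multiplicative.ofAdd v) : A) : G) with hφ
  have hφmem : ∀ v, φ v ∈ A := fun v => (e.symm (Multiplicative.ofAdd v)).2
  have hφmul : ∀ v w, φ (v + w) = φ v * φ w := by
    intro v w
    have h0 : Multiplicative.ofAdd (v + w)
        = Multiplicative.ofAdd v * Multiplicative.ofAdd w := rfl
    simp only [hφ, h0, map_mul, Subgroup.coe_mul]
  have hφinj : Function.Injective φ := by
    intro v w hvw
    have h1 : (e.symm (Multiplicative.ofAdd v) : A) = e.symm (Multiplicative.ofAdd w) :=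
      Subtype.coe_injective hvw
    exact Multiplicative.ofAdd.injective (e.symm.injective h1)
  have hφ1 : φ 0 = 1 := by
    have h0 : Multiplicative.ofAdd (0 : Fin n → ℤ) = (1 : Multiplicative (Fin n → ℤ)) := rfl
    simp only [hφ, h0, map_one, Subgroup.coe_one]
  have hφneg : ∀ v, φ (-v) = (φ v)⁻¹ := by
    intro v
    have : φ (-v) * φ v = 1 := by rw [← hφmul, neg_add_cancel, hφ1]
    exact eq_inv_of_mul_eq_one_left this
  have hφsurj : ∀ a ∈ A, ∃ v, φ v = a := by
    intro a ha
    refine ⟨Multiplicative.toAdd (e ⟨a, ha⟩), ?_⟩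
    simp only [hφ]
    rw [ofAdd_toAdd, MulEquiv.symm_apply_apply]
  -- the conjugation endomorphisms
  have hconjmem : ∀ v, x * φ v * x⁻¹ ∈ A := fun v => hA.conj_mem _ (hφmem v) x
  have hconjmem' : ∀ v, x⁻¹ * φ v * x ∈ A := fun v => by
    simpa using hA.conj_mem _ (hφmem v) x⁻¹
  set tf : (Fin n → ℤ) → (Fin n → ℤ) :=
    fun v => Multiplicative.toAdd (e ⟨x * φ v * x⁻¹, hconjmem v⟩) with htfdef
  set tf' : (Fin n → ℤ) → (Fin n → ℤ) :=
    fun v => Multiplicative.toAdd (e ⟨x⁻¹ * φ v * x, hconjmem' v⟩) with htfdef'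
  have htf : ∀ v, φ (tf v) = x * φ v * x⁻¹ := by
    intro v
    simp only [hφ, htfdef]
    rw [ofAdd_toAdd, MulEquiv.symm_apply_apply]
  have htf' : ∀ v, φ (tf' v) = x⁻¹ * φ v * x := by
    intro v
    simp only [hφ, htfdef']
    rw [ofAdd_toAdd, MulEquiv.symm_apply_apply]
  have htf_add : ∀ v w, tf (v + w) = tf v + tf w := by
    intro v w
    apply hφinj
    rw [hφmul, htf, htf, htf, hφmul]
    group
  have htf'_add : ∀ v w, tf' (v + w) = tf' v + tf' w := by
    intro v w
    apply hφinj
    rw [hφmul, htf', htf', htf', hφmul]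
    group
  set t : AddMonoid.End (Fin n → ℤ) := AddMonoidHom.mk' tf htf_add with ht
  set t' : AddMonoid.End (Fin n → ℤ) := AddMonoidHom.mk' tf' htf'_add with ht'
  have hφt : ∀ v, φ (t v) = x * φ v * x⁻¹ := htf
  have hφt' : ∀ v, φ (t' v) = x⁻¹ * φ v * x := htf'
  have htt' : ∀ v, t (t' v) = v := by
    intro v; apply hφinj; rw [hφt, hφt']; group
  have ht't : ∀ v, t' (t v) = v := by
    intro v; apply hφinj; rw [hφt', hφt]; group
  -- swap lemmas
  have hxswap : ∀ v, x * φ v = φ (t v) * x := by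
    intro v; rw [hφt]; group
  have hswap' : ∀ v, φ v * x = x * φ (t' v) := by
    intro v; rw [hφt']; group
  have hxswap' : ∀ v, x⁻¹ * φ v = φ (t' v) * x⁻¹ := by
    intro v; rw [hφt']; group
  -- t ^ p = 1
  have hpow : ∀ (m : ℕ) (v : Fin n → ℤ), φ ((t ^ m) v) = x ^ m * φ v * (x ^ m)⁻¹ := by
    intro m
    induction m with
    | zero => intro v; simp
    | succ m ih =>
      intro v
      have h1 : (t ^ (m + 1)) v = (t ^ m) (t v) := by rw [pow_succ]; rfl
      rw [h1, ih, hφt, pow_succ]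
      group
  have htp : t ^ p = 1 := by
    apply AddMonoidHom.ext
    intro v
    have h1 := hpow p v
    have h2 : x ^ p * φ v = φ v * x ^ p := hxp _ (hφmem v)
    have h3 : x ^ p * φ v * (x ^ p)⁻¹ = φ v := by rw [h2]; group
    have := hφinj (h1.trans h3)
    exact this
  -- kernel of t - 1 is trivial
  have hkert : ∀ v, t v = v → v = 0 := by
    intro v hv
    have h1 : x * φ v * x⁻¹ = φ v := by rw [← hφt, hv]
    have h2 := hfpf _ (hφmem v) h1
    apply hφinj
    rw [h2, hφ1]
  -- element outside the range of t - 1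
  obtain ⟨v₀, hv₀⟩ := keyEnd hn hp t htp
  -- closure properties of the range of t - 1
  have hR0 : ∃ w, t w - w = (0 : Fin n → ℤ) := ⟨0, by simp⟩
  have hRadd : ∀ a b : Fin n → ℤ, (∃ w, t w - w = a) → (∃ w, t w - w = b) →
      (∃ w, t w - w = a + b) := by
    rintro a b ⟨wa, rfl⟩ ⟨wb, rfl⟩
    refine ⟨wa + wb, ?_⟩
    rw [map_add]
    abel
  have hRneg : ∀ a : Fin n → ℤ, (∃ w, t w - w = a) → (∃ w, t w - w = -a) := by
    rintro a ⟨wa, rfl⟩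
    refine ⟨-wa, ?_⟩
    rw [map_neg]
    abel
  -- the subgroup H
  set S : Set G := {x} ∪ φ '' (Set.range fun w => t w - w) with hS
  set H : Subgroup G := Subgroup.closure S with hH
  have hxH : x ∈ H := Subgroup.subset_closure (Or.inl rfl)
  have hφRH : ∀ w, φ (t w - w) ∈ H :=
    fun w => Subgroup.subset_closure (Or.inr ⟨t w - w, ⟨w, rfl⟩, rfl⟩)
  -- normalizer criterion
  have hconjH : ∀ g : G, (∀ s ∈ S, g * s * g⁻¹ ∈ H) → ∀ h ∈ H, g * h * g⁻¹ ∈ H := by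
    intro g hg h hh
    refine Subgroup.closure_induction (p := fun h _ => g * h * g⁻¹ ∈ H)
      (fun s hs => hg s hs) (by simpa using one_mem H) ?_ ?_ hh
    · intro a b _ _ pa pb
      have : g * (a * b) * g⁻¹ = (g * a * g⁻¹) * (g * b * g⁻¹) := by group
      rw [this]; exact mul_mem pa pb
    · intro a _ pa
      have : g * a⁻¹ * g⁻¹ = (g * a * g⁻¹)⁻¹ := by group
      rw [this]; exact inv_mem pa
  have hnormmem : ∀ g : G, (∀ s ∈ S, g * s * g⁻¹ ∈ H) → (∀ s ∈ S, g⁻¹ * s * g ∈ H) →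
      g ∈ Subgroup.normalizer (H : Set G) := by
    intro g h1 h2
    rw [Subgroup.mem_normalizer_iff]
    intro h
    constructor
    · exact fun hh => hconjH g h1 h hh
    · intro hgh
      have h2' : ∀ s ∈ S, g⁻¹ * s * (g⁻¹)⁻¹ ∈ H := by
        intro s hs; rw [inv_inv]; exact h2 s hs
      have := hconjH g⁻¹ h2' _ hgh
      have heq : g⁻¹ * (g * h * g⁻¹) * (g⁻¹)⁻¹ = h := by group
      rwa [heq] at this
  -- the normalizer of H is everything
  have hNtop : Subgroup.normalizer (H : Set G) = ⊤ := by
    rw [eq_top_iff, ← hgen]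
    apply sup_le
    · rw [Subgroup.closure_le, Set.singleton_subset_iff]
      refine hnormmem x ?_ ?_
      · rintro s (hs | ⟨v, ⟨w, rfl⟩, rfl⟩)
        · rw [Set.mem_singleton_iff] at hs; rw [hs]
          have h0 : x * x * x⁻¹ = x := by group
          rw [h0]; exact hxH
        · rw [← hφt, map_sub]
          exact hφRH (t w)
      · rintro s (hs | ⟨v, ⟨w, rfl⟩, rfl⟩)
        · rw [Set.mem_singleton_iff] at hs; rw [hs]
          have h0 : x⁻¹ * x * x = x := by group
          rw [h0]; exact hxH
        · rw [← hφt', map_sub, ht't]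
          have heq : w - t' w = t (t' w) - t' w := by rw [htt']
          rw [heq]
          exact hφRH (t' w)
    · intro a ha
      obtain ⟨u, rfl⟩ := hφsurj a ha
      refine hnormmem (φ u) ?_ ?_
      · rintro s (hs | ⟨v, ⟨w, rfl⟩, rfl⟩)
        · rw [Set.mem_singleton_iff] at hs; rw [hs]
          rw [hswap' u, ← hφneg, mul_assoc, ← hφmul]
          have heq : t' u + -u = -(t (t' u) - t' u) := by rw [htt']; abel
          rw [heq, hφneg]
          exact mul_mem hxH (inv_mem (hφRH (t' u)))
        · rw [← hφneg, ← hφmul, ← hφmul]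
          have heq : u + (t w - w) + -u = t w - w := by abel
          rw [heq]
          exact hφRH w
      · rintro s (hs | ⟨v, ⟨w, rfl⟩, rfl⟩)
        · rw [Set.mem_singleton_iff] at hs; rw [hs]
          rw [← hφneg, hswap' (-u), mul_assoc, ← hφmul]
          have heq : t' (-u) + u = t (t' u) - t' u := by
            rw [map_neg, htt']; abel
          rw [heq]
          exact mul_mem hxH (hφRH (t' u))
        · rw [← hφneg, ← hφmul, ← hφmul]
          have heq : -u + (t w - w) + u = t w - w := by abel
          rw [heq]
          exact hφRH w
  -- moving powers of x past elements of A
  have hzconj : ∀ (k : ℤ) (u : Fin n → ℤ), ∃ u' : Fin n → ℤ,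
      x ^ k * φ u = φ u' * x ^ k ∧ ((∃ w, t w - w = u) → (∃ w, t w - w = u')) := by
    intro k
    induction k using Int.induction_on with
    | zero => intro u; exact ⟨u, by simp, id⟩
    | succ k ih =>
      intro u
      obtain ⟨u', h1, h2⟩ := ih u
      have hx1 : x ^ ((k : ℤ) + 1) = x * x ^ (k : ℤ) := by
        rw [add_comm, zpow_one_add]
      refine ⟨t u', ?_, ?_⟩
      · calc x ^ ((k : ℤ) + 1) * φ u = x * (x ^ (k : ℤ) * φ u) := by rw [hx1, mul_assoc]
          _ = x * (φ u' * x ^ (k : ℤ)) := by rw [h1]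
          _ = (x * φ u') * x ^ (k : ℤ) := by rw [mul_assoc]
          _ = (φ (t u') * x) * x ^ (k : ℤ) := by rw [hxswap u']
          _ = φ (t u') * x ^ ((k : ℤ) + 1) := by rw [mul_assoc, ← hx1]
      · intro hu
        obtain ⟨w, hw⟩ := h2 hu
        exact ⟨t w, by rw [← hw, map_sub]⟩
    | pred k ih =>
      intro u
      obtain ⟨u', h1, h2⟩ := ih u
      have hx1 : x ^ (-(k : ℤ) - 1) = x⁻¹ * x ^ (-(k : ℤ)) := by
        have h9 : (-(k : ℤ) - 1) = (-1) + (-(k : ℤ)) := by ring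
        rw [h9, zpow_add, zpow_neg_one]
      refine ⟨t' u', ?_, ?_⟩
      · calc x ^ (-(k : ℤ) - 1) * φ u = x⁻¹ * (x ^ (-(k : ℤ)) * φ u) := by
              rw [hx1, mul_assoc]
          _ = x⁻¹ * (φ u' * x ^ (-(k : ℤ))) := by rw [h1]
          _ = (x⁻¹ * φ u') * x ^ (-(k : ℤ)) := by rw [mul_assoc]
          _ = (φ (t' u') * x⁻¹) * x ^ (-(k : ℤ)) := by rw [hxswap' u']
          _ = φ (t' u') * x ^ (-(k : ℤ) - 1) := by rw [mul_assoc, ← hx1]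
      · intro hu
        obtain ⟨w, hw⟩ := h2 hu
        refine ⟨t' w, ?_⟩
        rw [← hw, map_sub, ht't, htt']
  -- the subgroup K of elements (element of range) * (power of x)
  set K : Subgroup G :=
    { carrier := {g | ∃ u' : Fin n → ℤ, (∃ w, t w - w = u') ∧ ∃ k : ℤ, g = φ u' * x ^ k}
      one_mem' := ⟨0, hR0, 0, by rw [hφ1, one_mul, zpow_zero]⟩
      mul_mem' := by
        rintro g h ⟨u, hu, k, rfl⟩ ⟨v, hv, m, rfl⟩
        obtain ⟨v', hvv, hvR⟩ := hzconj k v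
        refine ⟨u + v', hRadd _ _ hu (hvR hv), k + m, ?_⟩
        calc φ u * x ^ k * (φ v * x ^ m) = φ u * (x ^ k * φ v) * x ^ m := by group
          _ = φ u * (φ v' * x ^ k) * x ^ m := by rw [hvv]
          _ = (φ u * φ v') * (x ^ k * x ^ m) := by group
          _ = φ (u + v') * x ^ (k + m) := by rw [← hφmul, zpow_add]
      inv_mem' := by
        rintro g ⟨u, hu, k, rfl⟩
        obtain ⟨u', huu, huR⟩ := hzconj (-k) (-u)
        refine ⟨u', huR (hRneg _ hu), -k, ?_⟩
        have h1 : (φ u * x ^ k)⁻¹ = x ^ (-k) * φ (-u) := by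
          rw [hφneg]; group
        rw [h1, huu] } with hK
  have hHK : H ≤ K := by
    rw [hH, Subgroup.closure_le]
    rintro s (hs | ⟨v, ⟨w, rfl⟩, rfl⟩)
    · rw [Set.mem_singleton_iff] at hs; rw [hs]
      exact ⟨0, hR0, 1, by rw [hφ1, one_mul, zpow_one]⟩
    · exact ⟨t w - w, ⟨w, rfl⟩, 0, by rw [zpow_zero, mul_one]⟩
  have hv0K : φ v₀ ∉ K := by
    rintro ⟨u, hu, k, hk⟩
    have hxkz : x ^ k ∈ Subgroup.zpowers x := Subgroup.mem_zpowers_iff.mpr ⟨k, rfl⟩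
    have hxkA : x ^ k ∈ A := by
      have h1 : x ^ k = (φ u)⁻¹ * φ v₀ := by rw [hk]; group
      rw [h1, ← hφneg, ← hφmul]
      exact hφmem _
    have hxkbot : x ^ k ∈ (⊥ : Subgroup G) := by
      rw [← hint]; exact Subgroup.mem_inf.mpr ⟨hxkz, hxkA⟩
    have hxk1 : x ^ k = 1 := Subgroup.mem_bot.mp hxkbot
    have h2 : φ v₀ = φ u := by rw [hk, hxk1, mul_one]
    obtain ⟨w, hw⟩ := hu
    exact hv₀ w (by rw [hw, hφinj h2])
  -- a non-commuting pair in H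
  rw [Subgroup.ne_bot_iff_exists_ne_one] at hnt
  obtain ⟨⟨a, haA⟩, hane⟩ := hnt
  obtain ⟨u₁, hu₁⟩ := hφsurj a haA
  have hu₁0 : u₁ ≠ 0 := by
    intro h0
    apply hane
    apply Subtype.ext
    show a = 1
    rw [← hu₁, h0, hφ1]
  have hbH : φ (t u₁ - u₁) ∈ H := hφRH u₁
  have hxbne : x * φ (t u₁ - u₁) ≠ φ (t u₁ - u₁) * x := by
    intro hc
    have h1 : x * φ (t u₁ - u₁) * x⁻¹ = φ (t u₁ - u₁) := by rw [hc]; group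
    have h2 := hfpf _ (hφmem _) h1
    have h3 : t u₁ - u₁ = 0 := by
      apply hφinj; rw [h2, hφ1]
    have h4 : t u₁ = u₁ := by rwa [sub_eq_zero] at h3
    exact hu₁0 (hkert u₁ h4)
  -- conclusion
  have hHsn := hY H ⟨x, hxH, φ (t u₁ - u₁), hbH, hxbne⟩
  rw [hNtop] at hHsn
  exact hv0K (hHK (hHsn ▸ Subgroup.mem_top (φ v₀)))
end

section
/- Let n > 2. The dihedral group Dih(n) of order 2n belongs to 𝔜 if and only if n = 4 or n is odd. -/
namespace DihedralGroup

theorem r_inv' {n : ℕ} (i : ZMod n) : (r i)⁻¹ = r (-i) := by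
  rw [inv_eq_iff_mul_eq_one, one_def, r_mul_r, add_neg_cancel]

theorem sr_inv' {n : ℕ} (i : ZMod n) : (sr i)⁻¹ = sr i := by
  rw [inv_eq_iff_mul_eq_one, one_def, sr_mul_sr, sub_self]

end DihedralGroup

/-- In `ZMod n` with `n` odd, membership in an additive subgroup descends along doubling. -/
lemma dbl_odd {n : ℕ} (hodd : Odd n) (K : AddSubgroup (ZMod n)) (x : ZMod n)
    (hx : 2 * x ∈ K) : x ∈ K := by
  obtain ⟨m, hm⟩ := hodd
  have h : (m + 1) • (2 * x) = x := by
    have : ((m + 1) : ℕ) • (2 * x) = ((m + 1 : ℕ) : ZMod n) * (2 * x) := by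
      simp [nsmul_eq_mul]
    rw [this]
    have hn : ((n : ℕ) : ZMod n) = 0 := ZMod.natCast_self n
    have : ((m + 1 : ℕ) : ZMod n) * 2 = ((2 * m + 1 + 1 : ℕ) : ZMod n) := by
      push_cast; ring
    rw [← mul_assoc, this, ← hm]
    push_cast [hn]
    ring
  rw [← h]
  exact K.nsmul_mem hx (m + 1)

/-- In `ZMod 4`, an additive subgroup containing an element of order not dividing 2
is the whole group. -/
lemma dbl_four (K : AddSubgroup (ZMod 4)) (k : ZMod 4) (hk : k ∈ K) (h2 : 2 * k ≠ 0)
    (x : ZMod 4) : x ∈ K := by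
  have hkk : k * k = 1 := by
    have h13 : ∀ y : ZMod 4, 2 * y ≠ 0 → y * y = 1 := by decide
    exact h13 k h2
  have h : (x * k).val • k = x := by
    rw [nsmul_eq_mul, ZMod.natCast_val, ZMod.cast_id, mul_assoc, hkk, mul_one]
  rw [← h]
  exact K.nsmul_mem hk _

theorem stmt_14 (n : ℕ) (hn : 2 < n) :
    IsY (DihedralGroup n) ↔ n = 4 ∨ Odd n := by
  constructor
  · -- contrapositive: if n ≠ 4 and n even, construct a bad subgroup
    intro hY
    by_contra hcon
    push_neg at hcon
    obtain ⟨hne4, heven⟩ := hcon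
    rw [Nat.not_odd_iff_even] at heven
    have hn6 : 6 ≤ n := by
      obtain ⟨m, hm⟩ := heven
      omega
    -- the subgroup of "even" elements
    set H : Subgroup (DihedralGroup n) :=
      { carrier := {x | ∃ m : ZMod n, x = DihedralGroup.r (2 * m) ∨ x = DihedralGroup.sr (2 * m)}
        one_mem' := ⟨0, Or.inl (by rw [DihedralGroup.one_def, mul_zero])⟩
        mul_mem' := by
          rintro a b ⟨p, hp | hp⟩ ⟨q, hq | hq⟩ <;> subst hp <;> subst hq <;> simp only
            [DihedralGroup.r_mul_r, DihedralGroup.r_mul_sr, DihedralGroup.sr_mul_r,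
              DihedralGroup.sr_mul_sr]
          · exact ⟨p + q, Or.inl (by rw [mul_add])⟩
          · exact ⟨q - p, Or.inr (by rw [mul_sub])⟩
          · exact ⟨p + q, Or.inr (by rw [mul_add])⟩
          · exact ⟨q - p, Or.inl (by rw [mul_sub])⟩
        inv_mem' := by
          rintro a ⟨p, hp | hp⟩ <;> subst hp
          · exact ⟨-p, Or.inl (by rw [DihedralGroup.r_inv', mul_neg])⟩
          · exact ⟨p, Or.inr (by rw [DihedralGroup.sr_inv'])⟩ } with hH
    have h4 : (4 : ZMod n) ≠ 0 := by
      intro h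
      rw [show (4 : ZMod n) = ((4 : ℕ) : ZMod n) by push_cast; ring] at h
      rw [ZMod.natCast_eq_zero_iff] at h
      exact absurd (Nat.le_of_dvd (by norm_num) h) (by omega)
    have hr2 : DihedralGroup.r 2 ∈ H := ⟨1, Or.inl (by norm_num)⟩
    have hs0 : DihedralGroup.sr 0 ∈ H := ⟨0, Or.inr (by norm_num)⟩
    have hnc : DihedralGroup.r (2 : ZMod n) * DihedralGroup.sr 0
        ≠ DihedralGroup.sr 0 * DihedralGroup.r 2 := by
      simp only [DihedralGroup.r_mul_sr, DihedralGroup.sr_mul_r, ne_eq, DihedralGroup.sr.injEq,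
        zero_sub, zero_add]
      intro h
      exact h4 (by linear_combination -h)
    have hEq := hY H ⟨_, hr2, _, hs0, hnc⟩
    -- but r 1 is in the normalizer and not in H
    have hr1 : DihedralGroup.r (1 : ZMod n) ∈ Subgroup.normalizer (H : Set (DihedralGroup n)) := by
      rw [Subgroup.mem_normalizer_iff]
      rintro (j | j)
      · have hc : DihedralGroup.r 1 * DihedralGroup.r j * (DihedralGroup.r 1)⁻¹
            = DihedralGroup.r j := by
          rw [DihedralGroup.r_inv', DihedralGroup.r_mul_r, DihedralGroup.r_mul_r]
          exact congrArg _ (by ring)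
        rw [hc]
      · have hc : DihedralGroup.r 1 * DihedralGroup.sr j * (DihedralGroup.r 1)⁻¹
            = DihedralGroup.sr (j - 2) := by
          rw [DihedralGroup.r_inv', DihedralGroup.r_mul_sr, DihedralGroup.sr_mul_r]
          exact congrArg _ (by ring)
        rw [hc]
        constructor
        · rintro ⟨m, hm | hm⟩
          · exact absurd hm (by simp)
          · rw [DihedralGroup.sr.injEq] at hm
            exact ⟨m - 1, Or.inr (congrArg _ (by rw [hm]; ring))⟩
        · rintro ⟨m, hm | hm⟩
          · exact absurd hm (by simp)
          · rw [DihedralGroup.sr.injEq] at hm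
            refine ⟨m + 1, Or.inr (congrArg _ ?_)⟩
            have : j = j - 2 + 2 := by ring
            rw [this, hm]; ring
    rw [hEq] at hr1
    obtain ⟨m, hm | hm⟩ := hr1
    · rw [DihedralGroup.r.injEq] at hm
      -- 1 = 2*m in ZMod n with n even: contradiction via ZMod 2
      have h2n : (2 : ℕ) ∣ n := heven.two_dvd
      have hcast := congrArg (ZMod.castHom h2n (ZMod 2)) hm
      simp only [map_one, map_mul, map_ofNat] at hcast
      rw [show (2 : ZMod 2) = 0 from rfl, zero_mul] at hcast
      exact one_ne_zero hcast
    · exact absurd hm (by simp)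
  · -- forward: n = 4 or n odd implies IsY
    intro hcase H ⟨a, ha, b, hb, hab⟩
    refine le_antisymm ?_ Subgroup.le_normalizer
    -- the rotation subgroup of H, as an additive subgroup of ZMod n
    set K : AddSubgroup (ZMod n) :=
      { carrier := {k | DihedralGroup.r k ∈ H}
        zero_mem' := by simpa [← DihedralGroup.one_def] using H.one_mem
        add_mem' := by
          intro p q hp hq
          simpa using H.mul_mem hp hq
        neg_mem' := by
          intro p hp
          have := H.inv_mem hp
          rwa [DihedralGroup.r_inv'] at this } with hK
    have hKmem : ∀ k : ZMod n, k ∈ K ↔ DihedralGroup.r k ∈ H := fun _ => Iff.rfl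
    -- from non-abelianness: there is a reflection in H and a rotation r k ∈ H with 2k ≠ 0
    have key : (∃ j, DihedralGroup.sr j ∈ H) ∧ (∃ k, k ∈ K ∧ 2 * k ≠ 0) := by
      rcases a with i | i <;> rcases b with j | j
      · exact absurd (by simp [add_comm]) hab
      · refine ⟨⟨j, hb⟩, ⟨i, ha, ?_⟩⟩
        intro h2
        apply hab
        simp only [DihedralGroup.r_mul_sr, DihedralGroup.sr_mul_r, DihedralGroup.sr.injEq]
        have : (2 : ZMod n) * i = i + i := by ring
        rw [this] at h2
        have : i = -i := by linear_combination h2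
        rw [sub_eq_add_neg, ← this, add_comm]
      · refine ⟨⟨i, ha⟩, ⟨j, hb, ?_⟩⟩
        intro h2
        apply hab
        simp only [DihedralGroup.r_mul_sr, DihedralGroup.sr_mul_r, DihedralGroup.sr.injEq]
        have : (2 : ZMod n) * j = j + j := by ring
        rw [this] at h2
        have : j = -j := by linear_combination h2
        rw [sub_eq_add_neg, ← this, add_comm]
      · refine ⟨⟨i, ha⟩, ⟨j - i, ?_, ?_⟩⟩
        · have := H.mul_mem ha hb
          rwa [DihedralGroup.sr_mul_sr] at this
        · intro h2
          apply hab
          simp only [DihedralGroup.sr_mul_sr, DihedralGroup.r.injEq]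
          linear_combination h2
    obtain ⟨⟨j, hj⟩, k, hk, h2k⟩ := key
    -- doubling property
    have dbl : ∀ x : ZMod n, 2 * x ∈ K → x ∈ K := by
      rcases hcase with h4 | hodd
      · subst h4
        exact fun x _ => dbl_four K k hk h2k x
      · exact dbl_odd hodd K
    -- main argument
    rintro (t | t) hg <;> rw [Subgroup.mem_normalizer_iff] at hg
    · -- g = r t
      have h1 : DihedralGroup.sr (j - 2 * t) ∈ H := by
        have := (hg (DihedralGroup.sr j)).mp hj
        rwa [DihedralGroup.r_inv', DihedralGroup.r_mul_sr, DihedralGroup.sr_mul_r,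
          show j - t + -t = j - 2 * t by ring] at this
      have h2 : DihedralGroup.r (-(2 * t)) ∈ H := by
        have := H.mul_mem hj h1
        rwa [DihedralGroup.sr_mul_sr, show j - 2 * t - j = -(2 * t) by ring] at this
      have h2' : 2 * t ∈ K := by
        have := K.neg_mem ((hKmem _).mpr h2)
        rwa [neg_neg] at this
      exact dbl t h2'
    · -- g = sr t
      have h1 : DihedralGroup.sr (2 * t - j) ∈ H := by
        have := (hg (DihedralGroup.sr j)).mp hj
        rwa [DihedralGroup.sr_inv', DihedralGroup.sr_mul_sr, DihedralGroup.r_mul_sr,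
          show t - (j - t) = 2 * t - j by ring] at this
      have h2 : DihedralGroup.r (2 * (t - j)) ∈ H := by
        have := H.mul_mem hj h1
        rwa [DihedralGroup.sr_mul_sr, show 2 * t - j - j = 2 * (t - j) by ring] at this
      have h3 : t - j ∈ K := dbl (t - j) h2
      have := H.mul_mem hj ((hKmem _).mp h3)
      rwa [DihedralGroup.sr_mul_r, show j + (t - j) = t by ring] at this
end
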